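/- In an NIP theory, strong splitting implies dividing: if p ∈ S(B) splits strongly over A, then some formula in p divides over A. -/

import Mathlib

open FirstOrder Cardinal

universe u

variable {L : FirstOrder.Language.{u, u}} {M : Type u} [L.Structure M]

/-- A formula in `m` free variables together with a tuple of parameters from `M`. -/
structure PFormula (L : FirstOrder.Language.{u, u}) (M : Type u) [L.Structure M] (m : ℕ) where
  n : ℕ
  toFormula : L.Formula (Fin m ⊕ Fin n)
  par : Fin n → M

namespace PFormula

variable {m : ℕ}

/-- Realization of a parametrized formula by an `m`-tuple. -/
def Realize (ψ : PFormula L M m) (a : Fin m → M) : Prop :=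
  ψ.toFormula.Realize (Sum.elim a ψ.par)

/-- Realization of a parametrized formula in one variable by an element. -/
def Realize1 (ψ : PFormula L M 1) (a : M) : Prop :=
  ψ.Realize fun _ => a

/-- Negation of a parametrized formula. -/
def not (ψ : PFormula L M m) : PFormula L M m :=
  ⟨ψ.n, ψ.toFormula.not, ψ.par⟩

/-- The parameters of `ψ` all lie in `B`. -/
def Over (ψ : PFormula L M m) (B : Set M) : Prop :=
  ∀ i, ψ.par i ∈ B

end PFormula

/-- Two tuples have the same type over the parameter set `A`. -/
def SameTypeOver (L : FirstOrder.Language.{u, u}) {M : Type u} [L.Structure M]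
    (A : Set M) {γ : Type} (b c : γ → M) : Prop :=
  ∀ (k : ℕ) (φ : L.Formula (γ ⊕ Fin k)) (a : Fin k → M),
    (∀ i, a i ∈ A) → (φ.Realize (Sum.elim b a) ↔ φ.Realize (Sum.elim c a))

/-- A sequence of `d`-tuples, indexed by a linear order, is indiscernible over `A`. -/
def IndiscTupleSeqOver (L : FirstOrder.Language.{u, u}) {M : Type u} [L.Structure M]
    (A : Set M) {ι : Type*} [LinearOrder ι] {d : ℕ} (f : ι → Fin d → M) : Prop :=
  ∀ (n : ℕ) (s t : Fin n → ι), StrictMono s → StrictMono t →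
    SameTypeOver L A (fun q : Fin n × Fin d => f (s q.1) q.2)
      (fun q : Fin n × Fin d => f (t q.1) q.2)

/-- A sequence of elements, indexed by a linear order, is indiscernible over `A`. -/
def IndiscSeqOver (L : FirstOrder.Language.{u, u}) {M : Type u} [L.Structure M]
    (A : Set M) {ι : Type*} [LinearOrder ι] (f : ι → M) : Prop :=
  ∀ (n : ℕ) (s t : Fin n → ι), StrictMono s → StrictMono t →
    SameTypeOver L A (fun i => f (s i)) (fun i => f (t i))

/-- A family of elements is an indiscernible *set* over `A`: the type of a tuple of
distinct elements depends only on its length. -/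
def IndiscSetOver (L : FirstOrder.Language.{u, u}) {M : Type u} [L.Structure M]
    (A : Set M) {ι : Type*} (f : ι → M) : Prop :=
  ∀ (n : ℕ) (s t : Fin n → ι), Function.Injective s → Function.Injective t →
    SameTypeOver L A (fun i => f (s i)) (fun i => f (t i))

/-- `p` is a complete consistent `m`-type over `B`: all parameters come from `B`, for each
formula over `B` it contains the formula or its negation, and every finite subset is
realized (in the monster). -/
def IsTypeOver {m : ℕ} (p : Set (PFormula L M m)) (B : Set M) : Prop :=
  (∀ ψ ∈ p, ψ.Over B) ∧
  (∀ ψ : PFormula L M m, ψ.Over B → ψ ∈ p ∨ ψ.not ∈ p) ∧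
  (∀ s : Finset (PFormula L M m), ↑s ⊆ p → ∃ a : Fin m → M, ∀ ψ ∈ s, ψ.Realize a)

/-- `p` is finitely satisfiable in `A`: every finite subset of `p` is realized by a tuple
from `A`. -/
def FinSatIn {m : ℕ} (p : Set (PFormula L M m)) (A : Set M) : Prop :=
  ∀ s : Finset (PFormula L M m), ↑s ⊆ p →
    ∃ a : Fin m → M, (∀ i, a i ∈ A) ∧ ∀ ψ ∈ s, ψ.Realize a

/-- The complete type of an element `a` over the set `C`. -/
def tpOver (L : FirstOrder.Language.{u, u}) {M : Type u} [L.Structure M]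
    (a : M) (C : Set M) : Set (PFormula L M 1) :=
  {ψ | ψ.Over C ∧ ψ.Realize1 a}

/-- `p` (a type with parameters in `B`) does not split over `A`. -/
def DoesNotSplitOver {m : ℕ} (p : Set (PFormula L M m)) (B A : Set M) : Prop :=
  ∀ (n : ℕ) (b c : Fin n → M) (φ : L.Formula (Fin m ⊕ Fin n)),
    (∀ i, b i ∈ B) → (∀ i, c i ∈ B) → SameTypeOver L A b c →
    ((⟨n, φ, b⟩ : PFormula L M m) ∈ p ↔ (⟨n, φ, c⟩ : PFormula L M m) ∈ p)

/-- `p` (a type over `B`) is definable over `A`. -/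
def DefinableOver {m : ℕ} (p : Set (PFormula L M m)) (B A : Set M) : Prop :=
  ∀ (n : ℕ) (φ : L.Formula (Fin m ⊕ Fin n)),
    ∃ (k : ℕ) (d : L.Formula (Fin n ⊕ Fin k)) (e : Fin k → M), (∀ i, e i ∈ A) ∧
      ∀ b : Fin n → M, (∀ i, b i ∈ B) →
        ((⟨n, φ, b⟩ : PFormula L M m) ∈ p ↔ d.Realize (Sum.elim b e))

/-- The parametrized formula `ψ` divides over `A`. -/
def PFormula.Divides {m : ℕ} (ψ : PFormula L M m) (A : Set M) : Prop :=
  ∃ (f : ℕ → Fin ψ.n → M) (k : ℕ), 0 < k ∧ f 0 = ψ.par ∧ IndiscTupleSeqOver L A f ∧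
    ∀ s : Finset ℕ, s.card = k →
      ¬ ∃ a : Fin m → M, ∀ i ∈ s, ψ.toFormula.Realize (Sum.elim a (f i))

/-- The (partial) type `p` forks over `A`: some finite subset of `p` implies a finite
disjunction of formulas each of which divides over `A`. -/
def ForksOver {m : ℕ} (p : Set (PFormula L M m)) (A : Set M) : Prop :=
  ∃ (r : ℕ) (ψs : Fin r → PFormula L M m), (∀ j, (ψs j).Divides A) ∧
    ∃ s : Finset (PFormula L M m), ↑s ⊆ p ∧
      ∀ a : Fin m → M, (∀ χ ∈ s, χ.Realize a) → ∃ j, (ψs j).Realize a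

/-- `p` splits strongly over `A`. -/
def SplitsStronglyOver {m : ℕ} (p : Set (PFormula L M m)) (A : Set M) : Prop :=
  ∃ (n : ℕ) (f : ℕ → Fin n → M) (φ : L.Formula (Fin m ⊕ Fin n)),
    IndiscTupleSeqOver L A f ∧
    (⟨n, φ, f 0⟩ : PFormula L M m) ∈ p ∧ (PFormula.not ⟨n, φ, f 1⟩ : PFormula L M m) ∈ p

/-- Two tuples are of Lascar distance one over `A`: they lie on a common
`A`-indiscernible sequence. -/
def LascarDistOne (L : FirstOrder.Language.{u, u}) {M : Type u} [L.Structure M]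
    (A : Set M) {n : ℕ} (b c : Fin n → M) : Prop :=
  ∃ f : ℕ → Fin n → M, IndiscTupleSeqOver L A f ∧ ∃ i j : ℕ, f i = b ∧ f j = c

/-- Two tuples have the same Lascar strong type over `A` (finite Lascar distance). -/
def SameLstp (L : FirstOrder.Language.{u, u}) {M : Type u} [L.Structure M]
    (A : Set M) {n : ℕ} (b c : Fin n → M) : Prop :=
  Relation.ReflTransGen (fun x y => LascarDistOne L A x y) b c

/-- `p` (a type over `B`) Lascar-splits over `A`. -/
def LascarSplitsOver {m : ℕ} (p : Set (PFormula L M m)) (B A : Set M) : Prop :=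
  ∃ (n : ℕ) (b c : Fin n → M) (φ : L.Formula (Fin m ⊕ Fin n)),
    (∀ i, b i ∈ B) ∧ (∀ i, c i ∈ B) ∧ SameLstp L A b c ∧
    (⟨n, φ, b⟩ : PFormula L M m) ∈ p ∧ (PFormula.not ⟨n, φ, c⟩ : PFormula L M m) ∈ p

/-- The structure `M` is NIP ("dependent"): no formula alternates infinitely often on an
indiscernible sequence. -/
def IsNIP (L : FirstOrder.Language.{u, u}) (M : Type u) [L.Structure M] : Prop :=
  ∀ (d k : ℕ) (φ : L.Formula (Fin d ⊕ Fin k)) (f : ℕ → Fin d → M) (c : Fin k → M),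
    IndiscTupleSeqOver L (∅ : Set M) f →
    ¬ ({i : ℕ | φ.Realize (Sum.elim (f i) c)}.Infinite ∧
        {i : ℕ | ¬ φ.Realize (Sum.elim (f i) c)}.Infinite)

/-- The subset `N` of the monster is `κ`-saturated: every type over a subset of `N` of
size `< κ` which is finitely satisfiable is realized inside `N`. -/
def SetSaturated (L : FirstOrder.Language.{u, u}) {M : Type u} [L.Structure M]
    (N : Set M) (κ : Cardinal.{u}) : Prop :=
  ∀ C : Set M, C ⊆ N → #C < κ → ∀ (m : ℕ) (p : Set (PFormula L M m)),
    (∀ ψ ∈ p, ψ.Over C) →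
    (∀ s : Finset (PFormula L M m), ↑s ⊆ p → ∃ a : Fin m → M, ∀ ψ ∈ s, ψ.Realize a) →
    ∃ a : Fin m → M, (∀ i, a i ∈ N) ∧ ∀ ψ ∈ p, ψ.Realize a

/-- `M` is a monster model: it is saturated in every cardinality below `#M`. -/
def IsMonster (L : FirstOrder.Language.{u, u}) (M : Type u) [L.Structure M] : Prop :=
  ∀ κ : Cardinal.{u}, κ < #M → SetSaturated L (Set.univ : Set M) κ

/-- The average type of an `ω`-indexed indiscernible set over `C`: formulas over `C` true
of all but finitely many elements of the set. -/
def AvSet (L : FirstOrder.Language.{u, u}) {M : Type u} [L.Structure M]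
    (f : ℕ → M) (C : Set M) : Set (PFormula L M 1) :=
  {ψ | ψ.Over C ∧ {i : ℕ | ¬ ψ.Realize1 (f i)}.Finite}

/-- The average type of an endless indiscernible sequence over `C`: formulas over `C`
true of all sufficiently late elements of the sequence. -/
def AvSeq (L : FirstOrder.Language.{u, u}) {M : Type u} [L.Structure M]
    {ι : Type*} [LinearOrder ι] (f : ι → M) (C : Set M) : Set (PFormula L M 1) :=
  {ψ | ψ.Over C ∧ ∃ i₀ : ι, ∀ i ≥ i₀, ψ.Realize1 (f i)}

/-- The algebraic closure of `A` in `M`. -/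
def aclSet (L : FirstOrder.Language.{u, u}) {M : Type u} [L.Structure M]
    (A : Set M) : Set M :=
  {a | ∃ ψ : PFormula L M 1, ψ.Over A ∧ ψ.Realize1 a ∧ {x : M | ψ.Realize1 x}.Finite}

/-- `p ∈ S(A)` is generically stable: there is a nonforking sequence of realizations of
`p` over `A` which is an indiscernible set. -/
def GenericallyStable (p : Set (PFormula L M 1)) (A : Set M) : Prop :=
  ∃ f : ℕ → M,
    (∀ i, ∀ ψ ∈ p, ψ.Realize1 (f i)) ∧
    IndiscSetOver L A f ∧
    ∀ i : ℕ, ¬ ForksOver (tpOver L (f i) (A ∪ f '' {j | j < i})) A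

/-- The Boolean algebra of `B`-definable subsets of `A^m`. -/
def DefSub (L : FirstOrder.Language.{u, u}) {M : Type u} [L.Structure M]
    (A B : Set M) (m : ℕ) : Set (Set (Fin m → M)) :=
  {S | ∃ ψ : PFormula L M m, ψ.Over B ∧ S = {a | (∀ i, a i ∈ A) ∧ ψ.Realize a}}

/-- An ultrafilter on the Boolean algebra of `B`-definable subsets of `A^m`. -/
structure UltraOn (L : FirstOrder.Language.{u, u}) {M : Type u} [L.Structure M]
    (A B : Set M) (m : ℕ) where
  sets : Set (Set (Fin m → M))
  subset_def : sets ⊆ DefSub L A B m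
  inter_mem : ∀ S ∈ sets, ∀ T ∈ sets, S ∩ T ∈ sets
  superset_mem : ∀ S ∈ sets, ∀ T ∈ DefSub L A B m, S ⊆ T → T ∈ sets
  nonempty_mem : ∀ S ∈ sets, S.Nonempty
  ultra : ∀ S ∈ DefSub L A B m,
    S ∈ sets ∨ ({a : Fin m → M | ∀ i, a i ∈ A} \ S) ∈ sets

/-- The average type of an ultrafilter on `Def_m(A,B)` over `B`. -/
def AvU {A B : Set M} {m : ℕ} (U : UltraOn L A B m) : Set (PFormula L M m) :=
  {ψ | ψ.Over B ∧ {a : Fin m → M | (∀ i, a i ∈ A) ∧ ψ.Realize a} ∈ U.sets}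

namespace SSDAux

open FirstOrder.Language


open FirstOrder.Language

lemma realizeCongr {α : Type*} {θ : L.Formula α} {v w : α → M}
    (h : ∀ x, v x = w x) : θ.Realize v ↔ θ.Realize w := by
  rw [show v = w from funext h]

def dblIdx {n' : ℕ} (u : Fin n' → ℕ) (l : Fin (2 * n')) : ℕ :=
  2 * u ⟨l.val / 2, by have := l.isLt; omega⟩ + l.val % 2

lemma dblIdx_strictMono {n' : ℕ} {u : Fin n' → ℕ} (hu : StrictMono u) :
    StrictMono (dblIdx u) := by
  intro l1 l2 hl
  have hl' : l1.val < l2.val := hl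
  have h1 := l1.isLt
  have h2 := l2.isLt
  unfold dblIdx
  rcases (show l1.val / 2 < l2.val / 2 ∨
      (l1.val / 2 = l2.val / 2 ∧ l1.val % 2 < l2.val % 2) by omega) with h | ⟨ha, hb⟩
  · have := hu (show (⟨l1.val / 2, by omega⟩ : Fin n') < ⟨l2.val / 2, by omega⟩ from h)
    omega
  · have he : (⟨l1.val / 2, by omega⟩ : Fin n') = ⟨l2.val / 2, by omega⟩ := Fin.ext ha
    rw [he]
    omega

def pairIdx {n n' : ℕ} (q : Fin n' × Fin (n + n)) : Fin (2 * n') × Fin n :=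
  if h : (q.2 : ℕ) < n then (⟨2 * q.1.val, by have := q.1.isLt; omega⟩, ⟨q.2, h⟩)
  else (⟨2 * q.1.val + 1, by have := q.1.isLt; omega⟩,
    ⟨(q.2 : ℕ) - n, by have := q.2.isLt; omega⟩)

lemma pair_pt {n n' : ℕ} (f : ℕ → Fin n → M) (u : Fin n' → ℕ) (q : Fin n' × Fin (n + n)) :
    f (dblIdx u (pairIdx q).1) (pairIdx q).2
      = Fin.append (f (2 * u q.1)) (f (2 * u q.1 + 1)) q.2 := by
  by_cases h : (q.2 : ℕ) < n
  · have hq2 : q.2 = Fin.castAdd n ⟨(q.2 : ℕ), h⟩ := Fin.ext rfl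
    rw [hq2, Fin.append_left, pairIdx]
    simp only [dif_pos h]
    unfold dblIdx
    have hval : ∀ (h2 : 2 * (q.1 : ℕ) / 2 < n'),
        u ⟨2 * (q.1 : ℕ) / 2, h2⟩ = u q.1 :=
      fun h2 => congrArg u (Fin.ext (by show 2 * (q.1 : ℕ) / 2 = (q.1 : ℕ); omega))
    rw [hval]
    have hmod : 2 * (q.1 : ℕ) % 2 = 0 := by omega
    rw [hmod, Nat.add_zero]
  · have hq2 : q.2 = Fin.natAdd n ⟨(q.2 : ℕ) - n, by have := q.2.isLt; omega⟩ :=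
      Fin.ext (by simp [Fin.natAdd]; omega)
    rw [hq2, Fin.append_right, pairIdx]
    simp only [dif_neg h]
    unfold dblIdx
    have hval : ∀ (h2 : (2 * (q.1 : ℕ) + 1) / 2 < n'),
        u ⟨(2 * (q.1 : ℕ) + 1) / 2, h2⟩ = u q.1 :=
      fun h2 => congrArg u (Fin.ext (by show (2 * (q.1 : ℕ) + 1) / 2 = (q.1 : ℕ); omega))
    rw [hval]
    have hmod : (2 * (q.1 : ℕ) + 1) % 2 = 1 := by omega
    rw [hmod]


lemma indiscEmpty {d : ℕ} {A : Set M} {f : ℕ → Fin d → M}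
    (hf : IndiscTupleSeqOver L A f) : IndiscTupleSeqOver L (∅ : Set M) f := by
  intro n s t hs ht k θ aa haa
  cases k with
  | zero => exact hf n s t hs ht 0 θ aa (fun i => i.elim0)
  | succ k' => exact absurd (haa 0) (Set.notMem_empty _)

lemma nipContra (hNIP : IsNIP L M) {m n : ℕ} (g : ℕ → Fin n → M)
    (hg : IndiscTupleSeqOver L (∅ : Set M) g) (φ : L.Formula (Fin m ⊕ Fin n)) (a : Fin m → M)
    (h : ∀ i : ℕ, φ.Realize (Sum.elim a (g (2 * i))) ∧
      ¬ φ.Realize (Sum.elim a (g (2 * i + 1)))) : False := by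
  have hswap : ∀ i : ℕ, ((φ.relabel Sum.swap).Realize (Sum.elim (g i) a) ↔
      φ.Realize (Sum.elim a (g i))) := by
    intro i
    rw [Formula.realize_relabel]
    exact realizeCongr (by rintro (x | x) <;> rfl)
  refine hNIP n m (φ.relabel Sum.swap) g a hg ⟨?_, ?_⟩
  · refine Set.infinite_of_injective_forall_mem (f := fun i : ℕ => 2 * i) ?_ ?_
    · intro i j hij; simpa using hij
    · intro i
      simp only [Set.mem_setOf_eq, hswap]
      exact (h i).1
  · refine Set.infinite_of_injective_forall_mem (f := fun i : ℕ => 2 * i + 1) ?_ ?_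
    · intro i j hij; simpa using hij
    · intro i
      simp only [Set.mem_setOf_eq, hswap]
      exact (h i).2

lemma indiscPairs {n : ℕ} {A : Set M} {f : ℕ → Fin n → M}
    (hf : IndiscTupleSeqOver L A f) :
    IndiscTupleSeqOver L A (fun i => Fin.append (f (2 * i)) (f (2 * i + 1))) := by
  intro n' s t hs ht k θ aa haa
  have hrel : ∀ u : Fin n' → ℕ,
      (((θ.relabel (Sum.map pairIdx id)).Realize
          (Sum.elim (fun r : Fin (2 * n') × Fin n => f (dblIdx u r.1) r.2) aa)) ↔
        θ.Realize (Sum.elim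
          (fun q : Fin n' × Fin (n + n) => Fin.append (f (2 * u q.1)) (f (2 * u q.1 + 1)) q.2)
          aa)) := by
    intro u
    rw [Formula.realize_relabel]
    refine realizeCongr ?_
    rintro (q | x)
    · exact pair_pt f u q
    · rfl
  have key := hf (2 * n') (dblIdx s) (dblIdx t) (dblIdx_strictMono hs) (dblIdx_strictMono ht)
    k (θ.relabel (Sum.map pairIdx id)) aa haa
  rw [hrel s, hrel t] at key
  exact key

def PInv {m n : ℕ} (f : ℕ → Fin n → M) (A_ : ℕ → Fin m → M) (U : Ultrafilter ℕ)
    (s : ℕ) (a : Fin m → M) (c : Fin s → Fin n → M) : Prop :=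
  ∀ θ : L.Formula (Fin m ⊕ (Fin s × Fin n)),
    (θ.Realize (Sum.elim a (fun q : Fin s × Fin n => c q.1 q.2)) ↔
      {k : ℕ | θ.Realize (Sum.elim (A_ k) (fun q : Fin s × Fin n => f q.1 q.2))} ∈ U)

lemma pinv_base (hM : IsMonster L M) (hinf : Infinite M) {m n : ℕ}
    (f : ℕ → Fin n → M) (A_ : ℕ → Fin m → M) (U : Ultrafilter ℕ) :
    ∃ a : Fin m → M, PInv (L := L) f A_ U 0 a Fin.elim0 := by
  classical
  set p₀ : Set (PFormula L M m) :=
    {ψ | ∃ θ : L.Formula (Fin m ⊕ Fin 0), ψ = ⟨0, θ, Fin.elim0⟩ ∧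
      {k : ℕ | θ.Realize (Sum.elim (A_ k) Fin.elim0)} ∈ U} with hp₀
  have hreal0 : ∀ ψ ∈ p₀, {k : ℕ | ψ.Realize (A_ k)} ∈ U := by
    rintro ψ ⟨θ, rfl, hθ⟩
    exact hθ
  have hover : ∀ ψ ∈ p₀, ψ.Over (∅ : Set M) := by
    rintro ψ ⟨θ, rfl, -⟩ i
    exact i.elim0
  have hsat : ∀ S : Finset (PFormula L M m), ↑S ⊆ p₀ →
      ∃ a : Fin m → M, ∀ ψ ∈ S, ψ.Realize a := by
    intro S hS
    have hU : (⋂ ψ ∈ S, {k : ℕ | ψ.Realize (A_ k)}) ∈ U :=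
      (Filter.biInter_finset_mem S).2 fun ψ hψ => hreal0 ψ (hS hψ)
    obtain ⟨k, hk⟩ := Ultrafilter.nonempty_of_mem hU
    exact ⟨A_ k, fun ψ hψ => Set.mem_iInter₂.1 hk ψ hψ⟩
  obtain ⟨a, -, ha⟩ := hM 1
    (lt_of_lt_of_le Cardinal.one_lt_aleph0 (Cardinal.infinite_iff.1 hinf))
    ∅ (Set.empty_subset _)
    (by rw [Cardinal.mk_emptyCollection]; exact zero_lt_one) m p₀ hover hsat
  refine ⟨a, ?_⟩
  intro θ
  set θ0 : L.Formula (Fin m ⊕ Fin 0) :=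
    θ.relabel (Sum.map id (fun q : Fin 0 × Fin n => (q.1.elim0 : Fin 0))) with hθ0
  have hc : ∀ (b : Fin m → M) (d : Fin 0 × Fin n → M),
      (θ0.Realize (Sum.elim b Fin.elim0) ↔ θ.Realize (Sum.elim b d)) := by
    intro b d
    rw [hθ0, FirstOrder.Language.Formula.realize_relabel]
    refine realizeCongr ?_
    rintro (i | q)
    · rfl
    · exact q.1.elim0
  have hsets : {k : ℕ | θ0.Realize (Sum.elim (A_ k) Fin.elim0)}
      = {k : ℕ | θ.Realize (Sum.elim (A_ k) (fun q : Fin 0 × Fin n => f (q.1 : ℕ) q.2))} :=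
    Set.ext fun k => hc (A_ k) _
  constructor
  · intro hre
    by_contra hU
    have hx : {k : ℕ | θ.Realize
        (Sum.elim (A_ k) (fun q : Fin 0 × Fin n => f (q.1 : ℕ) q.2))}ᶜ ∈ U :=
      Ultrafilter.compl_mem_iff_notMem.2 hU
    have hy : {k : ℕ | θ0.not.Realize (Sum.elim (A_ k) Fin.elim0)} ∈ U := by
      have he : {k : ℕ | θ0.not.Realize (Sum.elim (A_ k) Fin.elim0)}
          = {k : ℕ | θ.Realize
              (Sum.elim (A_ k) (fun q : Fin 0 × Fin n => f (q.1 : ℕ) q.2))}ᶜ := by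
        ext k
        simp only [Set.mem_setOf_eq, Set.mem_compl_iff,
          FirstOrder.Language.Formula.realize_not]
        exact not_congr (hc (A_ k) _)
      rw [he]
      exact hx
    have hmem : (⟨0, θ0.not, Fin.elim0⟩ : PFormula L M m) ∈ p₀ := ⟨θ0.not, rfl, hy⟩
    have h2 : θ0.not.Realize (Sum.elim a Fin.elim0) := ha _ hmem
    rw [FirstOrder.Language.Formula.realize_not] at h2
    exact h2 ((hc a _).2 hre)
  · intro hU
    have hmem : (⟨0, θ0, Fin.elim0⟩ : PFormula L M m) ∈ p₀ :=
      ⟨θ0, rfl, by rw [hsets]; exact hU⟩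
    have h2 : θ0.Realize (Sum.elim a Fin.elim0) := ha _ hmem
    exact (hc a _).1 h2

def emb (m s n : ℕ) : (Fin m ⊕ Fin s × Fin n) ≃ Fin (m + s * n) :=
  (Equiv.sumCongr (Equiv.refl (Fin m)) finProdFinEquiv).trans finSumFinEquiv

def parOf {m s n : ℕ} (a : Fin m → M) (c : Fin s → Fin n → M) : Fin (m + s * n) → M :=
  fun j => Sum.elim a (fun q : Fin s × Fin n => c q.1 q.2) ((emb m s n).symm j)

lemma pinv_step (hM : IsMonster L M) (hinf : Infinite M) {m n : ℕ}
    (f : ℕ → Fin n → M) (A_ : ℕ → Fin m → M) (U : Ultrafilter ℕ)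
    (s : ℕ) (a : Fin m → M) (c : Fin s → Fin n → M) (hP : PInv (L := L) f A_ U s a c) :
    ∃ w : Fin n → M, PInv (L := L) f A_ U (s + 1) a (Fin.snoc c w) := by
  classical
  set park : ℕ → Fin (m + s * n) → M := fun k => parOf (A_ k) (fun t : Fin s => f t)
    with hpark
  -- transfer of parameter-free-over-(a,c) formulas
  have htrans : ∀ θE : L.Formula (Fin (m + s * n)),
      (θE.Realize (parOf a c) ↔ {k : ℕ | θE.Realize (park k)} ∈ U) := by
    intro θE
    have h1 := hP (θE.relabel (fun j => (emb m s n).symm j))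
    have hL : ((θE.relabel (fun j => (emb m s n).symm j)).Realize
        (Sum.elim a (fun q : Fin s × Fin n => c q.1 q.2)) ↔ θE.Realize (parOf a c)) := by
      rw [Formula.realize_relabel]
      exact realizeCongr fun x => rfl
    have hR : ∀ k, ((θE.relabel (fun j => (emb m s n).symm j)).Realize
        (Sum.elim (A_ k) (fun q : Fin s × Fin n => f q.1 q.2)) ↔
          θE.Realize (park k)) := by
      intro k
      rw [Formula.realize_relabel]
      exact realizeCongr fun x => rfl
    refine (hL.symm.trans h1).trans ?_
    rw [show {k : ℕ | (θE.relabel (fun j => (emb m s n).symm j)).Realize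
        (Sum.elim (A_ k) (fun q : Fin s × Fin n => f q.1 q.2))}
        = {k : ℕ | θE.Realize (park k)} from Set.ext fun k => hR k]
  set ps : Set (PFormula L M n) :=
    {ψ | ∃ θE : L.Formula (Fin n ⊕ Fin (m + s * n)), ψ = ⟨m + s * n, θE, parOf a c⟩ ∧
      {k : ℕ | θE.Realize (Sum.elim (f s) (park k))} ∈ U} with hps
  have hover : ∀ ψ ∈ ps, ψ.Over (Set.range (parOf a c)) := by
    rintro ψ ⟨θE, rfl, -⟩ i
    exact ⟨i, rfl⟩
  have hsat : ∀ S : Finset (PFormula L M n), ↑S ⊆ ps →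
      ∃ w : Fin n → M, ∀ ψ ∈ S, ψ.Realize w := by
    intro S hS
    have hch : ∀ ψ : {x // x ∈ S}, ∃ θE : L.Formula (Fin n ⊕ Fin (m + s * n)),
        (ψ : PFormula L M n) = ⟨m + s * n, θE, parOf a c⟩ ∧
        {k : ℕ | θE.Realize (Sum.elim (f s) (park k))} ∈ U := fun ψ => hS ψ.2
    choose θof hθ1 hθ2 using hch
    set conj : L.Formula (Fin n ⊕ Fin (m + s * n)) := BoundedFormula.iInf θof
      with hconj
    set θE : L.Formula (Fin (m + s * n)) := (conj.relabel Sum.swap).iExs (Fin n) with hθE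
    have hUmem : {k : ℕ | θE.Realize (park k)} ∈ U := by
      have hsub : (⋂ ψ ∈ S.attach,
          {k : ℕ | (θof ψ).Realize (Sum.elim (f s) (park k))}) ∈ U :=
        (Filter.biInter_finset_mem S.attach).2 fun ψ _ => hθ2 ψ
      refine Filter.mem_of_superset hsub ?_
      intro k hk
      rw [Set.mem_iInter₂] at hk
      show θE.Realize (park k)
      rw [hθE, Formula.realize_iExs]
      simp only [Formula.realize_relabel, Function.comp_def]
      refine ⟨f s, ?_⟩
      have hv : (fun x : Fin n ⊕ Fin (m + s * n) =>
          Sum.elim (park k) (f s) (Sum.swap x)) = Sum.elim (f s) (park k) := by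
        funext x; cases x <;> rfl
      rw [hv]
      exact (BoundedFormula.realize_iInf (f := θof) (v := Sum.elim (f s) (park k)) (v' := default)).2
        fun ψ => hk ψ (Finset.mem_attach _ _)
    have hθEa : θE.Realize (parOf a c) := (htrans θE).2 hUmem
    rw [hθE, Formula.realize_iExs] at hθEa
    simp only [Formula.realize_relabel, Function.comp_def] at hθEa
    obtain ⟨w, hw⟩ := hθEa
    refine ⟨w, ?_⟩
    intro ψ hψ
    have hv : (fun x : Fin n ⊕ Fin (m + s * n) =>
        Sum.elim (parOf a c) w (Sum.swap x)) = Sum.elim w (parOf a c) := by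
      funext x; cases x <;> rfl
    rw [hv] at hw
    have hall := (BoundedFormula.realize_iInf (f := θof) (v := Sum.elim w (parOf a c)) (v' := default)).1 hw
    have h3 : (θof ⟨ψ, hψ⟩).Realize (Sum.elim w (parOf a c)) :=
      hall ⟨ψ, hψ⟩
    have h4 : ψ = (⟨m + s * n, θof ⟨ψ, hψ⟩, parOf a c⟩ : PFormula L M n) := hθ1 ⟨ψ, hψ⟩
    rw [h4]
    exact h3
  have hCfin : (Set.range (parOf a c)).Finite := Set.finite_range _
  obtain ⟨nc, hnc⟩ := Cardinal.lt_aleph0.1 hCfin.lt_aleph0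
  obtain ⟨w, -, hw⟩ := hM ((nc + 1 : ℕ) : Cardinal)
    (lt_of_lt_of_le (Cardinal.nat_lt_aleph0 _) (Cardinal.infinite_iff.1 hinf))
    (Set.range (parOf a c)) (Set.subset_univ _)
    (by rw [hnc]; exact_mod_cast Nat.lt_succ_self nc)
    n ps hover hsat
  refine ⟨w, ?_⟩
  intro θ
  set ρ : (Fin m ⊕ Fin (s + 1) × Fin n) → (Fin n ⊕ Fin (m + s * n)) :=
    Sum.elim (fun i => Sum.inr (emb m s n (Sum.inl i)))
      (fun q => Fin.lastCases (motive := fun _ => Fin n ⊕ Fin (m + s * n))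
        (Sum.inl q.2) (fun t' => Sum.inr (emb m s n (Sum.inr (t', q.2)))) q.1) with hρ
  have hR1 : ((θ.relabel ρ).Realize (Sum.elim w (parOf a c)) ↔
      θ.Realize (Sum.elim a (fun q : Fin (s + 1) × Fin n => Fin.snoc (α := fun _ => Fin n → M) c w q.1 q.2))) := by
    rw [Formula.realize_relabel]
    refine realizeCongr ?_
    rintro (i | ⟨t, i⟩)
    · show Sum.elim w (parOf a c) (ρ (Sum.inl i)) = a i
      simp [hρ, parOf]
    · induction t using Fin.lastCases with
      | last =>
        show Sum.elim w (parOf a c) (ρ (Sum.inr (Fin.last s, i)))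
          = Fin.snoc (α := fun _ => Fin n → M) c w (Fin.last s) i
        simp [hρ, Fin.snoc_last]
      | cast t' =>
        show Sum.elim w (parOf a c) (ρ (Sum.inr (Fin.castSucc t', i)))
          = Fin.snoc (α := fun _ => Fin n → M) c w (Fin.castSucc t') i
        simp [hρ, parOf, Fin.snoc_castSucc]
  have hR2 : ∀ k, ((θ.relabel ρ).Realize (Sum.elim (f s) (park k)) ↔
      θ.Realize (Sum.elim (A_ k) (fun q : Fin (s + 1) × Fin n => f q.1 q.2))) := by
    intro k
    rw [Formula.realize_relabel]
    refine realizeCongr ?_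
    rintro (i | ⟨t, i⟩)
    · show Sum.elim (f s) (park k) (ρ (Sum.inl i)) = A_ k i
      simp [hρ, hpark, parOf]
    · induction t using Fin.lastCases with
      | last =>
        show Sum.elim (f s) (park k) (ρ (Sum.inr (Fin.last s, i)))
          = f ((Fin.last s : Fin (s + 1)) : ℕ) i
        simp [hρ, Fin.val_last]
      | cast t' =>
        show Sum.elim (f s) (park k) (ρ (Sum.inr (Fin.castSucc t', i)))
          = f ((Fin.castSucc t' : Fin (s + 1)) : ℕ) i
        simp [hρ, hpark, parOf, Fin.coe_castSucc]
  have hsets2 : {k : ℕ | (θ.relabel ρ).Realize (Sum.elim (f s) (park k))}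
      = {k : ℕ | θ.Realize (Sum.elim (A_ k) (fun q : Fin (s + 1) × Fin n => f q.1 q.2))} :=
    Set.ext fun k => hR2 k
  constructor
  · intro hre
    by_contra hU
    have hx : {k : ℕ | θ.Realize
        (Sum.elim (A_ k) (fun q : Fin (s + 1) × Fin n => f q.1 q.2))}ᶜ ∈ U :=
      Ultrafilter.compl_mem_iff_notMem.2 hU
    have hy : {k : ℕ | (θ.relabel ρ).not.Realize (Sum.elim (f s) (park k))} ∈ U := by
      have he : {k : ℕ | (θ.relabel ρ).not.Realize (Sum.elim (f s) (park k))}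
          = {k : ℕ | θ.Realize
              (Sum.elim (A_ k) (fun q : Fin (s + 1) × Fin n => f q.1 q.2))}ᶜ := by
        ext k
        simp only [Set.mem_setOf_eq, Set.mem_compl_iff, Formula.realize_not]
        exact not_congr (hR2 k)
      rw [he]
      exact hx
    have hmem : (⟨m + s * n, (θ.relabel ρ).not, parOf a c⟩ : PFormula L M n) ∈ ps :=
      ⟨(θ.relabel ρ).not, rfl, hy⟩
    have h2 : (θ.relabel ρ).not.Realize (Sum.elim w (parOf a c)) := hw _ hmem
    rw [Formula.realize_not] at h2
    exact h2 (hR1.2 hre)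
  · intro hU
    have hmem : (⟨m + s * n, θ.relabel ρ, parOf a c⟩ : PFormula L M n) ∈ ps :=
      ⟨θ.relabel ρ, rfl, by rw [hsets2]; exact hU⟩
    exact hR1.1 (hw _ hmem)

lemma pinv_seq (hM : IsMonster L M) (hinf : Infinite M) {m n : ℕ}
    (f : ℕ → Fin n → M) (A_ : ℕ → Fin m → M) (U : Ultrafilter ℕ) :
    ∃ (a : Fin m → M) (cs : ℕ → Fin n → M),
      ∀ s : ℕ, PInv (L := L) f A_ U s a (fun t : Fin s => cs t) := by
  obtain ⟨a, ha0⟩ := pinv_base hM hinf f A_ U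
  let F : ∀ s : ℕ, {c : Fin s → Fin n → M // PInv (L := L) f A_ U s a c} := fun s =>
    Nat.rec ⟨Fin.elim0, ha0⟩
      (fun s' prev => ⟨Fin.snoc prev.1 (pinv_step hM hinf f A_ U s' a prev.1 prev.2).choose,
        (pinv_step hM hinf f A_ U s' a prev.1 prev.2).choose_spec⟩) s
  refine ⟨a, fun i => (F (i + 1)).1 (Fin.last i), ?_⟩
  have coh : ∀ (s : ℕ) (t : Fin s), (F s).1 t = (F (t.val + 1)).1 (Fin.last t.val) := by
    intro s
    induction s with
    | zero => exact fun t => t.elim0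
    | succ s' ih =>
      intro t
      induction t using Fin.lastCases with
      | last => rfl
      | cast t' =>
        have hsnoc : (F (s' + 1)).1 = Fin.snoc (F s').1
            (pinv_step hM hinf f A_ U s' a (F s').1 (F s').2).choose := rfl
        rw [hsnoc, Fin.snoc_castSucc]
        exact ih t'
  intro s
  show PInv (L := L) f A_ U s a (fun t : Fin s => (F (t.val + 1)).1 (Fin.last t.val))
  have h2 : (fun t : Fin s => (F (t.val + 1)).1 (Fin.last t.val)) = (F s).1 :=
    funext fun t => (coh s t).symm
  rw [h2]
  exact (F s).2

lemma key (hM : IsMonster L M) (hNIP : IsNIP L M) {m n : ℕ}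
    (f : ℕ → Fin n → M) (hf0 : IndiscTupleSeqOver L (∅ : Set M) f)
    (φ : L.Formula (Fin m ⊕ Fin n)) (A_ : ℕ → Fin m → M)
    (hA : ∀ k i : ℕ, i < k → φ.Realize (Sum.elim (A_ k) (f (2 * i))) ∧
      ¬ φ.Realize (Sum.elim (A_ k) (f (2 * i + 1)))) : False := by
  rcases finite_or_infinite M with hfin | hinf
  · obtain ⟨a, hfib⟩ := Finite.exists_infinite_fiber A_
    have hinf' : (A_ ⁻¹' {a}).Infinite := Set.infinite_coe_iff.1 hfib
    refine nipContra hNIP f hf0 φ a fun i => ?_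
    obtain ⟨k, hk1, hk2⟩ := hinf'.exists_gt i
    have h := hA k i hk2
    rwa [show A_ k = a from hk1] at h
  · set U : Ultrafilter ℕ := Filter.hyperfilter ℕ with hU
    obtain ⟨a, cs, hPs⟩ := pinv_seq hM hinf f A_ U
    have haltern : ∀ j : ℕ, (φ.Realize (Sum.elim a (cs j)) ↔
        {k : ℕ | φ.Realize (Sum.elim (A_ k) (f j))} ∈ U) := by
      intro j
      have hP' := hPs (j + 1)
        (φ.relabel (Sum.map id (fun l : Fin n => ((Fin.last j : Fin (j + 1)), l))))
      have hL : ((φ.relabel (Sum.map id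
          (fun l : Fin n => ((Fin.last j : Fin (j + 1)), l)))).Realize
          (Sum.elim a (fun q : Fin (j + 1) × Fin n => cs q.1 q.2)) ↔
          φ.Realize (Sum.elim a (cs j))) := by
        rw [Formula.realize_relabel]
        refine realizeCongr ?_
        rintro (i | l)
        · rfl
        · show cs ((Fin.last j : Fin (j + 1)) : ℕ) l = cs j l
          rw [Fin.val_last]
      have hRk : ∀ k, ((φ.relabel (Sum.map id
          (fun l : Fin n => ((Fin.last j : Fin (j + 1)), l)))).Realize
          (Sum.elim (A_ k) (fun q : Fin (j + 1) × Fin n => f q.1 q.2)) ↔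
          φ.Realize (Sum.elim (A_ k) (f j))) := by
        intro k
        rw [Formula.realize_relabel]
        refine realizeCongr ?_
        rintro (i | l)
        · rfl
        · show f ((Fin.last j : Fin (j + 1)) : ℕ) l = f j l
          rw [Fin.val_last]
      refine (hL.symm.trans hP').trans ?_
      rw [show {k : ℕ | (φ.relabel (Sum.map id
          (fun l : Fin n => ((Fin.last j : Fin (j + 1)), l)))).Realize
          (Sum.elim (A_ k) (fun q : Fin (j + 1) × Fin n => f q.1 q.2))}
          = {k : ℕ | φ.Realize (Sum.elim (A_ k) (f j))} from Set.ext fun k => hRk k]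
    have htrue : ∀ i : ℕ, φ.Realize (Sum.elim a (cs (2 * i))) := by
      intro i
      refine (haltern (2 * i)).2 ?_
      have hss : {k : ℕ | i < k} ⊆ {k : ℕ | φ.Realize (Sum.elim (A_ k) (f (2 * i)))} :=
        fun k hk => (hA k i hk).1
      refine Filter.mem_of_superset ?_ hss
      rw [hU]
      refine Filter.mem_hyperfilter_of_finite_compl ?_
      have he : {k : ℕ | i < k}ᶜ = {k : ℕ | k ≤ i} := by
        ext k; simp [Nat.not_lt]
      rw [he]
      exact Set.finite_le_nat i
    have hfalse : ∀ i : ℕ, ¬ φ.Realize (Sum.elim a (cs (2 * i + 1))) := by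
      intro i hcon
      have h1 := (haltern (2 * i + 1)).1 hcon
      have hss : {k : ℕ | φ.Realize (Sum.elim (A_ k) (f (2 * i + 1)))} ⊆ {k : ℕ | k ≤ i} := by
        intro k hk
        simp only [Set.mem_setOf_eq] at hk ⊢
        by_contra hle
        exact (hA k i (by omega)).2 hk
      rw [hU] at h1
      exact Filter.notMem_hyperfilter_of_finite ((Set.finite_le_nat i).subset hss) h1
    have hcsInd : IndiscTupleSeqOver L (∅ : Set M) cs := by
      intro n' s t hs ht k θ aa haa
      cases k with
      | succ k' => exact absurd (haa 0) (Set.notMem_empty _)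
      | zero =>
        rcases Nat.eq_zero_or_pos n' with rfl | hpos
        · refine realizeCongr ?_
          rintro (q | x)
          · exact q.1.elim0
          · rfl
        · obtain ⟨n'', rfl⟩ : ∃ n'', n' = n'' + 1 := ⟨n' - 1, by omega⟩
          set Sb := max (s (Fin.last n'')) (t (Fin.last n'')) + 1 with hSb
          have hside : ∀ u : Fin (n'' + 1) → ℕ, (∀ j, u j < Sb) →
              ((θ.Realize (Sum.elim
                  (fun q : Fin (n'' + 1) × Fin n => cs (u q.1) q.2) aa)) ↔
               (θ.Realize (Sum.elim
                  (fun q : Fin (n'' + 1) × Fin n => f (u q.1) q.2) aa))) := by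
            intro u hlt
            set ρu : (Fin (n'' + 1) × Fin n) ⊕ Fin 0 → Fin m ⊕ Fin Sb × Fin n :=
              Sum.elim (fun q : Fin (n'' + 1) × Fin n =>
                  (Sum.inr ((⟨u q.1, hlt q.1⟩ : Fin Sb), q.2) : Fin m ⊕ Fin Sb × Fin n))
                (fun x => x.elim0) with hρu
            have hP' := hPs Sb (θ.relabel ρu)
            have hL : ((θ.relabel ρu).Realize
                (Sum.elim a (fun q : Fin Sb × Fin n => cs (q.1 : ℕ) q.2)) ↔
                θ.Realize (Sum.elim
                  (fun q : Fin (n'' + 1) × Fin n => cs (u q.1) q.2) aa)) := by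
              rw [Formula.realize_relabel]
              refine realizeCongr ?_
              rintro (q | x)
              · rfl
              · exact x.elim0
            have hRk : ∀ kk, ((θ.relabel ρu).Realize
                (Sum.elim (A_ kk) (fun q : Fin Sb × Fin n => f (q.1 : ℕ) q.2)) ↔
                θ.Realize (Sum.elim
                  (fun q : Fin (n'' + 1) × Fin n => f (u q.1) q.2) aa)) := by
              intro kk
              rw [Formula.realize_relabel]
              refine realizeCongr ?_
              rintro (q | x)
              · rfl
              · exact x.elim0
            have hP'' : θ.Realize (Sum.elim
                (fun q : Fin (n'' + 1) × Fin n => cs (u q.1) q.2) aa) ↔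
                {kk : ℕ | θ.Realize (Sum.elim
                  (fun q : Fin (n'' + 1) × Fin n => f (u q.1) q.2) aa)} ∈ U := by
              refine (hL.symm.trans hP').trans ?_
              rw [show {kk : ℕ | (θ.relabel ρu).Realize
                  (Sum.elim (A_ kk) (fun q : Fin Sb × Fin n => f (q.1 : ℕ) q.2))}
                  = {kk : ℕ | θ.Realize (Sum.elim
                      (fun q : Fin (n'' + 1) × Fin n => f (u q.1) q.2) aa)}
                  from Set.ext fun kk => hRk kk]
            rw [hP'']
            by_cases hft : θ.Realize (Sum.elim
                (fun q : Fin (n'' + 1) × Fin n => f (u q.1) q.2) aa)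
            · simp only [hft, Set.setOf_true, iff_true]
              exact Filter.univ_mem
            · simp only [hft, Set.setOf_false, iff_false]
              exact fun h => Set.not_nonempty_empty (Ultrafilter.nonempty_of_mem h)
          have hbS : ∀ j, s j < Sb := by
            intro j
            have h1 := hs.monotone (Fin.le_last j)
            have h2 : s (Fin.last n'') ≤ max (s (Fin.last n'')) (t (Fin.last n'')) :=
              le_max_left _ _
            omega
          have hbT : ∀ j, t j < Sb := by
            intro j
            have h1 := ht.monotone (Fin.le_last j)
            have h2 : t (Fin.last n'') ≤ max (s (Fin.last n'')) (t (Fin.last n'')) :=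
              le_max_right _ _
            omega
          exact (hside s hbS).trans ((hf0 (n'' + 1) s t hs ht 0 θ aa haa).trans
            (hside t hbT).symm)
    exact nipContra hNIP cs hcsInd φ a fun i => ⟨htrue i, hfalse i⟩

end SSDAux

/-- In an NIP theory, strong splitting implies dividing: if `p ∈ S(B)`
splits strongly over `A`, then some formula in `p` divides over `A`. -/
theorem strong_splitting_implies_dividing
    (hM : IsMonster L M) (hNIP : IsNIP L M) {m : ℕ}
    (A B : Set M) (p : Set (PFormula L M m)) (hp : IsTypeOver p B)
    (hss : SplitsStronglyOver p A) :
    ∃ ψ ∈ p, PFormula.Divides ψ A := by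
  classical
  obtain ⟨n, f, φ, hf, h0, h1⟩ := hss
  obtain ⟨hpOver, hpComp, hpCon⟩ := hp
  set g : ℕ → Fin (n + n) → M := fun i => Fin.append (f (2 * i)) (f (2 * i + 1)) with hg
  set χ : L.Formula (Fin m ⊕ Fin (n + n)) :=
    (φ.relabel (Sum.map id (Fin.castAdd n))) ⊓
      ((φ.relabel (Sum.map id (Fin.natAdd n))).not) with hχ
  have hχr : ∀ (a : Fin m → M) (i : ℕ),
      (χ.Realize (Sum.elim a (g i)) ↔
        (FirstOrder.Language.Formula.Realize φ (Sum.elim a (f (2 * i))) ∧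
          ¬ FirstOrder.Language.Formula.Realize φ (Sum.elim a (f (2 * i + 1))))) := by
    intro a i
    have hc1 : ((Sum.elim a (g i)) ∘ (Sum.map id (Fin.castAdd n)))
        = Sum.elim a (f (2 * i)) := by
      funext x
      cases x with
      | inl j => rfl
      | inr l =>
        show g i (Fin.castAdd n l) = f (2 * i) l
        simp only [hg]
        exact Fin.append_left _ _ _
    have hc2 : ((Sum.elim a (g i)) ∘ (Sum.map id (Fin.natAdd n)))
        = Sum.elim a (f (2 * i + 1)) := by
      funext x
      cases x with
      | inl j => rfl
      | inr l =>
        show g i (Fin.natAdd n l) = f (2 * i + 1) l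
        simp only [hg]
        exact Fin.append_right _ _ _
    rw [hχ, FirstOrder.Language.Formula.realize_inf,
      FirstOrder.Language.Formula.realize_not,
      FirstOrder.Language.Formula.realize_relabel,
      FirstOrder.Language.Formula.realize_relabel, hc1, hc2]
  set ψ : PFormula L M m := ⟨n + n, χ, g 0⟩ with hψ
  have hb0 : ∀ j, f 0 j ∈ B := hpOver _ h0
  have hb1 : ∀ j, f 1 j ∈ B := hpOver _ h1
  have hψB : ψ.Over B := by
    intro i
    show g 0 i ∈ B
    refine Fin.addCases (motive := fun i => g 0 i ∈ B) ?_ ?_ i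
    · intro j
      have he : g 0 (Fin.castAdd n j) = f 0 j := by
        simp only [hg]
        exact Fin.append_left _ _ _
      rw [he]
      exact hb0 j
    · intro j
      have he : g 0 (Fin.natAdd n j) = f 1 j := by
        simp only [hg]
        exact Fin.append_right _ _ _
      rw [he]
      exact hb1 j
  have hψp : ψ ∈ p := by
    rcases hpComp ψ hψB with h | h
    · exact h
    · exfalso
      obtain ⟨a, ha⟩ := hpCon
        {(⟨n, φ, f 0⟩ : PFormula L M m), PFormula.not ⟨n, φ, f 1⟩, ψ.not} (by
          intro x hx
          simp only [Finset.coe_insert, Set.mem_insert_iff, Finset.coe_singleton,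
            Set.mem_singleton_iff] at hx
          rcases hx with rfl | rfl | rfl
          · exact h0
          · exact h1
          · exact h)
      have r1 : (⟨n, φ, f 0⟩ : PFormula L M m).Realize a := ha _ (by simp)
      have r1' : FirstOrder.Language.Formula.Realize φ (Sum.elim a (f 0)) := r1
      have r2 : (PFormula.not ⟨n, φ, f 1⟩ : PFormula L M m).Realize a := ha _ (by simp)
      have r3 : (ψ.not).Realize a := ha _ (by simp)
      have r2' : ¬ FirstOrder.Language.Formula.Realize φ (Sum.elim a (f 1)) := by
        have h2 : (φ.not).Realize (Sum.elim a (f 1)) := r2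
        rwa [FirstOrder.Language.Formula.realize_not] at h2
      have r3' : ¬ χ.Realize (Sum.elim a (g 0)) := by
        have h2 : (χ.not).Realize (Sum.elim a (g 0)) := r3
        rwa [FirstOrder.Language.Formula.realize_not] at h2
      exact r3' ((hχr a 0).2 ⟨r1', r2'⟩)
  refine ⟨ψ, hψp, ?_⟩
  have hgInd : IndiscTupleSeqOver L A g := SSDAux.indiscPairs hf
  by_cases hK : ∃ K : ℕ, 0 < K ∧
    ¬ ∃ a : Fin m → M, ∀ i < K, χ.Realize (Sum.elim a (g i))
  · obtain ⟨K, hK0, hKno⟩ := hK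
    refine ⟨g, K, hK0, rfl, hgInd, ?_⟩
    rintro S hScard ⟨b, hb⟩
    apply hKno
    set conj : L.Formula (Fin m ⊕ (Fin K × Fin (n + n))) :=
      FirstOrder.Language.BoundedFormula.iInf
        (fun j : Fin K => χ.relabel (Sum.map id (fun l : Fin (n + n) => (j, l))))
      with hconj
    set Θ : L.Formula (Fin K × Fin (n + n)) := (conj.relabel Sum.swap).iExs (Fin m) with hΘ
    have hΘr : ∀ bb : Fin K → Fin (n + n) → M,
        (Θ.Realize (fun q : Fin K × Fin (n + n) => bb q.1 q.2) ↔
          ∃ w : Fin m → M, ∀ j : Fin K, χ.Realize (Sum.elim w (bb j))) := by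
      intro bb
      rw [hΘ, FirstOrder.Language.Formula.realize_iExs]
      simp only [FirstOrder.Language.Formula.realize_relabel, Function.comp_def]
      refine exists_congr fun w => ?_
      have hv : (fun x : Fin m ⊕ (Fin K × Fin (n + n)) =>
          Sum.elim (fun q : Fin K × Fin (n + n) => bb q.1 q.2) w (Sum.swap x))
          = Sum.elim w (fun q : Fin K × Fin (n + n) => bb q.1 q.2) := by
        funext x; cases x <;> rfl
      rw [hv]
      have hiInf : (conj.Realize
          (Sum.elim w (fun q : Fin K × Fin (n + n) => bb q.1 q.2)) ↔
          ∀ j ∈ (Finset.univ : Finset (Fin K)),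
            (χ.relabel (Sum.map id (fun l : Fin (n + n) => (j, l)))).Realize
              (Sum.elim w (fun q : Fin K × Fin (n + n) => bb q.1 q.2))) := by
        rw [hconj]
        rw [FirstOrder.Language.Formula.Realize, FirstOrder.Language.BoundedFormula.realize_iInf]
        simp only [Finset.mem_univ, true_implies]
        rfl
      rw [hiInf]
      constructor
      · intro hall j
        have h2 := hall j (Finset.mem_univ j)
        rw [FirstOrder.Language.Formula.realize_relabel] at h2
        exact (SSDAux.realizeCongr (by rintro (pp | l) <;> rfl)).1 h2
      · intro hall j _
        rw [FirstOrder.Language.Formula.realize_relabel]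
        exact (SSDAux.realizeCongr (by rintro (pp | l) <;> rfl)).2 (hall j)
    set σ : Fin K → ℕ := fun j => ((S.orderIsoOfFin hScard) j : ℕ) with hσ
    have hσmono : StrictMono σ := fun j1 j2 hj => (S.orderIsoOfFin hScard).strictMono hj
    have hσmem : ∀ j, σ j ∈ S := fun j => ((S.orderIsoOfFin hScard) j).2
    have hstart : Θ.Realize (fun q : Fin K × Fin (n + n) => g (σ q.1) q.2) :=
      (hΘr (fun j => g (σ j))).2 ⟨b, fun j => hb _ (hσmem j)⟩
    have hcoe : StrictMono (fun j : Fin K => (j : ℕ)) := fun j1 j2 hj => hj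
    have htrans := hgInd K σ (fun j => (j : ℕ)) hσmono hcoe 0 (Θ.relabel Sum.inl)
      Fin.elim0 (fun x => x.elim0)
    have hconv : ∀ bb : Fin K × Fin (n + n) → M,
        ((Θ.relabel Sum.inl).Realize (Sum.elim bb Fin.elim0) ↔ Θ.Realize bb) := by
      intro bb
      rw [FirstOrder.Language.Formula.realize_relabel]
      exact SSDAux.realizeCongr fun x => rfl
    rw [hconv, hconv] at htrans
    have hend := htrans.1 hstart
    obtain ⟨w, hw⟩ := (hΘr (fun j : Fin K => g (j : ℕ))).1 hend
    exact ⟨w, fun i hi => hw ⟨i, hi⟩⟩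
  · exfalso
    push_neg at hK
    choose A_ hA_ using fun k : ℕ => hK (k + 1) (Nat.succ_pos k)
    refine SSDAux.key hM hNIP f (SSDAux.indiscEmpty hf) φ A_ ?_
    intro k i hik
    exact (hχr (A_ k) i).1 (hA_ k i (Nat.lt_succ_of_lt hik))
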